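/- Let A₁, A₂, A₃ denote the standard basis of so(3) (infinitesimal rotations) with bracket relations [A₁, A₂] = A₃, [A₁, A₃] = -A₂, [A₂, A₃] = A₁. For the ball-with-trailer vector fields F₁ = ∂/∂x₁ + A₁ - (1/L)cos θ ∂/∂θ and F₂ = ∂/∂x₂ + A₂ - (1/L)sin θ ∂/∂θ on ℝ² × SO(3) × S¹, setting H = [F₁, F₂], I = [F₁, H], J = [F₂, H], one has: H = A₃ - (1/L²) ∂/∂θ, I = -A₂ - (1/L³) sin θ ∂/∂θ, J = A₁ + (1/L³) cos θ ∂/∂θ, [F₁, I] = -A₃ - (1/L⁴) ∂/∂θ, [F₁, J] = 0, [F₂, I] = 0, [F₂, J] = -A₃ - (1/L⁴) ∂/∂θ. -/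

import Mathlib

/-- Vector fields on the (x₁,x₂,θ)-factor ℝ³, identified with maps ℝ³ → ℝ³. -/
abbrev VF3 := (Fin 3 → ℝ) → (Fin 3 → ℝ)

/-- Bracket of coordinate-part vector fields (with the paper's sign convention
for right-invariant frames). -/
noncomputable def vfBr (X Y : VF3) : VF3 :=
  fun p => fderiv ℝ X p (Y p) - fderiv ℝ Y p (X p)

/-- The total state space: an so(3)-component (ℝ³ with the cross-product bracket,
modelling the right-invariant fields A₁, A₂, A₃ on SO(3), which commute with the
coordinate fields on the (x₁,x₂,θ)-factor) together with a vector field on ℝ³. -/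
abbrev BallVF := (Fin 3 → ℝ) × VF3

/-- Bracket on `BallVF`: cross product on the so(3)-part (so that
[A₁,A₂] = A₃, [A₁,A₃] = -A₂, [A₂,A₃] = A₁), `vfBr` on the coordinate part. -/
noncomputable def pbr (F G : BallVF) : BallVF :=
  (crossProduct F.1 G.1, vfBr F.2 G.2)


lemma hasfd (a₁ a₂ : ℝ) {g g' : ℝ → ℝ} (hg : ∀ t, HasDerivAt g (g' t) t) (p : Fin 3 → ℝ) :
    HasFDerivAt (fun q : Fin 3 → ℝ => ![a₁, a₂, g (q 2)])
      (ContinuousLinearMap.pi ![0, 0, g' (p 2) • ContinuousLinearMap.proj (R := ℝ) (φ := fun _ : Fin 3 => ℝ) 2]) p := by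
  rw [hasFDerivAt_pi']
  intro i
  fin_cases i <;>
    simp only [Matrix.cons_val_zero, Matrix.cons_val_one, Matrix.head_cons,
      ContinuousLinearMap.proj_pi, Fin.isValue, Matrix.cons_val_two, Matrix.tail_cons]
  · exact hasFDerivAt_const _ _
  · exact hasFDerivAt_const _ _
  · exact (hg (p 2)).comp_hasFDerivAt p (ContinuousLinearMap.proj (R := ℝ) (φ := fun _ : Fin 3 => ℝ) 2).hasFDerivAt

lemma vfBr_form (a₁ a₂ b₁ b₂ : ℝ) {g h g' h' : ℝ → ℝ}
    (hg : ∀ t, HasDerivAt g (g' t) t) (hh : ∀ t, HasDerivAt h (h' t) t) :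
    vfBr (fun p => ![a₁, a₂, g (p 2)]) (fun p => ![b₁, b₂, h (p 2)]) =
      fun p => ![0, 0, g' (p 2) * h (p 2) - h' (p 2) * g (p 2)] := by
  funext p
  unfold vfBr
  rw [(hasfd a₁ a₂ hg p).fderiv, (hasfd b₁ b₂ hh p).fderiv]
  ext i
  fin_cases i <;> simp [mul_comm]

lemma vfBr_zero : vfBr 0 0 = 0 := by
  funext p
  simp only [vfBr]
  have : fderiv ℝ (0 : VF3) p = 0 := by
    have : (0 : VF3) = fun _ => (0 : Fin 3 → ℝ) := rfl
    rw [this, fderiv_fun_const]; rfl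
  simp [this]

/-- For the ball with a trailer, with
F₁ = ∂x₁ + A₁ - (1/L) cos θ ∂θ and F₂ = ∂x₂ + A₂ - (1/L) sin θ ∂θ
(θ = third coordinate p 2), setting H = [F₁,F₂], I = [F₁,H], J = [F₂,H]:
H = A₃ - (1/L²)∂θ, I = -A₂ - (1/L³) sin θ ∂θ, J = A₁ + (1/L³) cos θ ∂θ,
[F₁,I] = -A₃ - (1/L⁴)∂θ, [F₁,J] = 0, [F₂,I] = 0, [F₂,J] = -A₃ - (1/L⁴)∂θ. -/
theorem stmt9 (L : ℝ) (hL : 0 < L)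
    (A₁ A₂ A₃ Dθ F₁ F₂ : BallVF)
    (hA₁ : A₁ = (![1, 0, 0], 0)) (hA₂ : A₂ = (![0, 1, 0], 0))
    (hA₃ : A₃ = (![0, 0, 1], 0))
    (hDθ : Dθ = (0, fun _ => ![0, 0, 1]))
    (hF₁ : F₁ = (![1, 0, 0], fun p => ![1, 0, -(1 / L) * Real.cos (p 2)]))
    (hF₂ : F₂ = (![0, 1, 0], fun p => ![0, 1, -(1 / L) * Real.sin (p 2)]))
    (H I J : BallVF)
    (hH : H = pbr F₁ F₂) (hI : I = pbr F₁ H) (hJ : J = pbr F₂ H) :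
    pbr A₁ A₂ = A₃ ∧ pbr A₁ A₃ = -A₂ ∧ pbr A₂ A₃ = A₁ ∧
    H = A₃ - (1 / L ^ 2) • Dθ ∧
    I = -A₂ - (1 / L ^ 3) • ((0 : Fin 3 → ℝ), fun p : Fin 3 → ℝ => ![0, 0, Real.sin (p 2)]) ∧
    J = A₁ + (1 / L ^ 3) • ((0 : Fin 3 → ℝ), fun p : Fin 3 → ℝ => ![0, 0, Real.cos (p 2)]) ∧
    pbr F₁ I = -A₃ - (1 / L ^ 4) • Dθ ∧
    pbr F₁ J = 0 ∧ pbr F₂ I = 0 ∧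
    pbr F₂ J = -A₃ - (1 / L ^ 4) • Dθ := by
  have hL' : L ≠ 0 := ne_of_gt hL
  -- derivative facts
  have dcos : ∀ t, HasDerivAt (fun t => -(1 / L) * Real.cos t) (1 / L * Real.sin t) t := by
    intro t
    have := (Real.hasDerivAt_cos t).const_mul (-(1 / L))
    rw [show 1 / L * Real.sin t = -(1 / L) * -Real.sin t by ring]; exact this
  have dsin : ∀ t, HasDerivAt (fun t => -(1 / L) * Real.sin t) (-(1 / L) * Real.cos t) t :=
    fun t => (Real.hasDerivAt_sin t).const_mul (-(1 / L))
  have dc : ∀ (c : ℝ) t, HasDerivAt (fun _ : ℝ => c) 0 t := fun c t => hasDerivAt_const t c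
  have dsin3 : ∀ t, HasDerivAt (fun t => -(1 / L ^ 3) * Real.sin t) (-(1 / L ^ 3) * Real.cos t) t :=
    fun t => (Real.hasDerivAt_sin t).const_mul (-(1 / L ^ 3))
  have dcos3 : ∀ t, HasDerivAt (fun t => 1 / L ^ 3 * Real.cos t) (-(1 / L ^ 3) * Real.sin t) t := by
    intro t
    have := (Real.hasDerivAt_cos t).const_mul (1 / L ^ 3)
    rw [show -(1 / L ^ 3) * Real.sin t = 1 / L ^ 3 * -Real.sin t by ring]; exact this
  subst hA₁ hA₂ hA₃ hDθ hF₁ hF₂ hH hI hJ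
  -- bracket computations on the coordinate part
  have hBr12 : vfBr (fun p => ![1, 0, -(1 / L) * Real.cos (p 2)])
      (fun p => ![0, 1, -(1 / L) * Real.sin (p 2)]) = fun _ => ![0, 0, -(1 / L ^ 2)] := by
    rw [vfBr_form 1 0 0 1 dcos dsin]
    funext p; ext i; fin_cases i <;> simp
    linear_combination (-(1 / L ^ 2)) * Real.sin_sq_add_cos_sq (p 2)
  have hBr1H : vfBr (fun p => ![1, 0, -(1 / L) * Real.cos (p 2)])
      (fun _ => ![0, 0, -(1 / L ^ 2)]) = fun p => ![0, 0, -(1 / L ^ 3) * Real.sin (p 2)] := by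
    rw [vfBr_form 1 0 0 0 dcos (dc (-(1 / L ^ 2)))]
    funext p; ext i; fin_cases i <;> simp
    ring
  have hBr2H : vfBr (fun p => ![0, 1, -(1 / L) * Real.sin (p 2)])
      (fun _ => ![0, 0, -(1 / L ^ 2)]) = fun p => ![0, 0, 1 / L ^ 3 * Real.cos (p 2)] := by
    rw [vfBr_form 0 1 0 0 dsin (dc (-(1 / L ^ 2)))]
    funext p; ext i; fin_cases i <;> simp
    ring
  have hBr1I : vfBr (fun p => ![1, 0, -(1 / L) * Real.cos (p 2)])
      (fun p => ![0, 0, -(1 / L ^ 3) * Real.sin (p 2)]) = fun _ => ![0, 0, -(1 / L ^ 4)] := by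
    rw [vfBr_form 1 0 0 0 dcos dsin3]
    funext p; ext i; fin_cases i <;> simp
    linear_combination (-(1 / L ^ 4)) * Real.sin_sq_add_cos_sq (p 2)
  have hBr1J : vfBr (fun p => ![1, 0, -(1 / L) * Real.cos (p 2)])
      (fun p => ![0, 0, 1 / L ^ 3 * Real.cos (p 2)]) = fun _ => ![0, 0, 0] := by
    rw [vfBr_form 1 0 0 0 dcos dcos3]
    funext p; ext i; fin_cases i <;> simp
    ring
  have hBr2I : vfBr (fun p => ![0, 1, -(1 / L) * Real.sin (p 2)])
      (fun p => ![0, 0, -(1 / L ^ 3) * Real.sin (p 2)]) = fun _ => ![0, 0, 0] := by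
    rw [vfBr_form 0 1 0 0 dsin dsin3]
    funext p; ext i; fin_cases i <;> simp
    ring
  have hBr2J : vfBr (fun p => ![0, 1, -(1 / L) * Real.sin (p 2)])
      (fun p => ![0, 0, 1 / L ^ 3 * Real.cos (p 2)]) = fun _ => ![0, 0, -(1 / L ^ 4)] := by
    rw [vfBr_form 0 1 0 0 dsin dcos3]
    funext p; ext i; fin_cases i <;> simp
    linear_combination (-(1 / L ^ 4)) * Real.sin_sq_add_cos_sq (p 2)
  refine ⟨?_, ?_, ?_, ?_, ?_, ?_, ?_, ?_, ?_, ?_⟩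
  · refine Prod.ext ?_ ?_
    · ext i; fin_cases i <;> simp [pbr, cross_apply]
    · simp [pbr, vfBr_zero]
  · refine Prod.ext ?_ ?_
    · ext i; fin_cases i <;> simp [pbr, cross_apply]
    · simp [pbr, vfBr_zero]
  · refine Prod.ext ?_ ?_
    · ext i; fin_cases i <;> simp [pbr, cross_apply]
    · simp [pbr, vfBr_zero]
  · refine Prod.ext ?_ ?_
    · ext i; fin_cases i <;> simp [pbr, cross_apply]
    · simp only [pbr, hBr12]
      funext p; ext i; fin_cases i <;> simp
  · refine Prod.ext ?_ ?_
    · simp only [pbr, hBr12]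
      ext i; fin_cases i <;> simp [cross_apply]
    · simp only [pbr, hBr12, hBr1H]
      funext p; ext i; fin_cases i <;> simp
  · refine Prod.ext ?_ ?_
    · simp only [pbr, hBr12]
      ext i; fin_cases i <;> simp [cross_apply]
    · simp only [pbr, hBr12, hBr2H]
      funext p; ext i; fin_cases i <;> simp
  · refine Prod.ext ?_ ?_
    · simp only [pbr, hBr12, hBr1H]
      ext i; fin_cases i <;> simp [cross_apply]
    · simp only [pbr, hBr12, hBr1H, hBr1I]
      funext p; ext i; fin_cases i <;> simp
  · refine Prod.ext ?_ ?_
    · simp only [pbr, hBr12, hBr2H]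
      ext i; fin_cases i <;> simp [cross_apply]
    · simp only [pbr, hBr12, hBr2H, hBr1J]
      funext p; ext i; fin_cases i <;> simp
  · refine Prod.ext ?_ ?_
    · simp only [pbr, hBr12, hBr1H]
      ext i; fin_cases i <;> simp [cross_apply]
    · simp only [pbr, hBr12, hBr1H, hBr2I]
      funext p; ext i; fin_cases i <;> simp
  · refine Prod.ext ?_ ?_
    · simp only [pbr, hBr12, hBr2H]
      ext i; fin_cases i <;> simp [cross_apply]
    · simp only [pbr, hBr12, hBr2H, hBr2J]
      funext p; ext i; fin_cases i <;> simp
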